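/- Fix d > 0 and let p = d/(d+1). If π_n is uniform on permutations of {1,...,n} with exactly d descents, then for every ε > 0 there exists N such that for all n ≥ N and all 1 ≤ k ≤ n, |P(π_n(1)=k)/((1-p)p^{k-1}) - 1| < ε. -/

import Mathlib

open Finset

/-- Number of descents of a permutation of `Fin n` (positions `i` with `π(i) > π(i+1)`). -/
def descents (n : ℕ) (π : Equiv.Perm (Fin n)) : ℕ :=
  (Finset.univ.filter (fun i : Fin n =>
    ∃ j : Fin n, (j : ℕ) = (i : ℕ) + 1 ∧ π j < π i)).card

/-- `A n d k` : number of permutations of `{1,…,n}` with exactly `d` descents and first value `k`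
(1-based values; `d : ℤ`, so `A n d k = 0` when `d < 0`). -/
def A (n : ℕ) (d : ℤ) (k : ℕ) : ℕ :=
  (Finset.univ.filter (fun π : Equiv.Perm (Fin n) =>
    (descents n π : ℤ) = d ∧ ∃ i : Fin n, (i : ℕ) = 0 ∧ (π i : ℕ) + 1 = k)).card

/-- `Alast n d k` : number with `d` descents and last value `k`. -/
def Alast (n : ℕ) (d : ℤ) (k : ℕ) : ℕ :=
  (Finset.univ.filter (fun π : Equiv.Perm (Fin n) =>
    (descents n π : ℤ) = d ∧ ∃ i : Fin n, (i : ℕ) + 1 = n ∧ (π i : ℕ) + 1 = k)).card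

/-- Eulerian number: permutations of `{1,…,n}` with `d` descents. -/
def Eul (n : ℕ) (d : ℤ) : ℕ :=
  (Finset.univ.filter (fun π : Equiv.Perm (Fin n) => (descents n π : ℤ) = d)).card

def Φ {n : ℕ} (p : Fin (n+1)) (e : Equiv.Perm (Fin n)) : Equiv.Perm (Fin (n+1)) :=
  (finSuccEquiv n).trans ((Equiv.optionCongr e).trans (finSuccEquiv' p).symm)

@[simp] lemma Φ_zero {n : ℕ} (p : Fin (n+1)) (e : Equiv.Perm (Fin n)) : Φ p e 0 = p := by
  simp [Φ]

@[simp] lemma Φ_succ {n : ℕ} (p : Fin (n+1)) (e : Equiv.Perm (Fin n)) (i : Fin n) :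
    Φ p e i.succ = p.succAbove (e i) := by
  simp [Φ]

lemma Φ_inj {n : ℕ} (p : Fin (n+1)) : Function.Injective (Φ p) := by
  intro e₁ e₂ h
  ext i
  have := congrArg (fun π : Equiv.Perm (Fin (n+1)) => π i.succ) h
  simp only [Φ_succ] at this
  exact congrArg Fin.val (Fin.succAbove_right_injective this)

lemma Φ_surj {n : ℕ} (p : Fin (n+1)) (π : Equiv.Perm (Fin (n+1))) (hπ : π 0 = p) :
    ∃ e, Φ p e = π := by
  set E := (finSuccEquiv n).symm.trans (π.trans (finSuccEquiv' p)) with hE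
  refine ⟨Equiv.removeNone E, ?_⟩
  have hnone : E none = none := by simp [hE, hπ]
  have : Equiv.optionCongr (Equiv.removeNone E) = E := by
    ext x
    cases x with
    | none => simp [hnone]
    | some a =>
      have hs : ∃ x', E (some a) = some x' := by
        cases h : E (some a) with
        | none => exact absurd (E.injective (h.trans hnone.symm)) (by simp)
        | some b => exact ⟨b, rfl⟩
      simp only [Equiv.optionCongr_apply, Option.map_some]
      rw [Equiv.removeNone_some E hs]
  unfold Φ
  rw [this]
  ext x
  simp [hE]

lemma descents_sum (n : ℕ) (π : Equiv.Perm (Fin n)) :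
    descents n π = ∑ i : Fin n,
      if (∃ j : Fin n, (j : ℕ) = (i : ℕ) + 1 ∧ π j < π i) then 1 else 0 := by
  rw [descents, Finset.card_filter]

lemma descents_Φ {n : ℕ} (p : Fin (n+2)) (e : Equiv.Perm (Fin (n+1))) :
    descents (n+2) (Φ p e) = descents (n+1) e + (if ((e 0 : ℕ) < (p : ℕ)) then 1 else 0) := by
  rw [descents_sum, descents_sum, Fin.sum_univ_succ]
  have h0 : (∃ j : Fin (n+2), (j : ℕ) = ((0 : Fin (n+2)) : ℕ) + 1 ∧ Φ p e j < Φ p e 0)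
      ↔ ((e 0 : ℕ) < (p : ℕ)) := by
    constructor
    · rintro ⟨j, hj, hlt⟩
      have hj' : j = Fin.succ (0 : Fin (n+1)) := by
        apply Fin.ext; simpa using hj
      rw [hj', Φ_succ, Φ_zero] at hlt
      have := (Fin.succAbove_lt_iff_castSucc_lt p (e 0)).mp hlt
      simpa [Fin.lt_def] using this
    · intro h
      refine ⟨Fin.succ 0, by simp, ?_⟩
      rw [Φ_succ, Φ_zero]
      exact (Fin.succAbove_lt_iff_castSucc_lt p (e 0)).mpr (by simpa [Fin.lt_def] using h)
  have hs : ∀ i : Fin (n+1),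
      (∃ j : Fin (n+2), (j : ℕ) = ((Fin.succ i : Fin (n+2)) : ℕ) + 1 ∧ Φ p e j < Φ p e i.succ)
      ↔ (∃ j : Fin (n+1), (j : ℕ) = (i : ℕ) + 1 ∧ e j < e i) := by
    intro i
    constructor
    · rintro ⟨j, hj, hlt⟩
      have hjne : j ≠ 0 := by
        intro h; rw [h] at hj; simp at hj
      obtain ⟨j', rfl⟩ : ∃ j', j = Fin.succ j' := ⟨j.pred hjne, (Fin.succ_pred j hjne).symm⟩
      refine ⟨j', ?_, ?_⟩
      · simp only [Fin.val_succ] at hj; omega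
      · rw [Φ_succ, Φ_succ] at hlt
        exact Fin.succAbove_lt_succAbove_iff.mp hlt
    · rintro ⟨j, hj, hlt⟩
      refine ⟨j.succ, by simp [hj], ?_⟩
      rw [Φ_succ, Φ_succ]
      exact Fin.succAbove_lt_succAbove_iff.mpr hlt
  rw [Finset.sum_congr rfl (fun i _ => if_congr (hs i) (rfl : (1:ℕ) = 1) rfl)]
  rw [if_congr h0 (rfl : (1:ℕ) = 1) rfl]
  exact Nat.add_comm _ _

def C1 (n : ℕ) (d : ℤ) (p : Fin (n+1)) : ℕ :=
  (Finset.univ.filter (fun π : Equiv.Perm (Fin (n+1)) =>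
    (descents (n+1) π : ℤ) = d ∧ π 0 = p)).card

lemma C1_neg {n : ℕ} {d : ℤ} (hd : d < 0) (p : Fin (n+1)) : C1 n d p = 0 := by
  rw [C1, Finset.card_eq_zero, Finset.filter_eq_empty_iff]
  rintro π - ⟨h, -⟩
  omega

lemma C1_base (d : ℤ) (p : Fin 1) : C1 0 d p = if d = 0 then 1 else 0 := by
  have hdesc : ∀ π : Equiv.Perm (Fin 1), descents 1 π = 0 := by
    intro π
    rw [descents, Finset.card_eq_zero, Finset.filter_eq_empty_iff]
    rintro i - ⟨j, hj, -⟩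
    omega
  rw [C1]
  split_ifs with h
  · rw [Finset.filter_true_of_mem, Finset.card_univ]
    · simp
    · intro π _
      refine ⟨by rw [hdesc]; omega, ?_⟩
      have h1 := (π 0).isLt
      have h2 := p.isLt
      apply Fin.ext
      omega
  · rw [Finset.card_eq_zero, Finset.filter_eq_empty_iff]
    rintro π - ⟨hπ, -⟩
    rw [hdesc] at hπ
    exact h (by omega)

lemma C1_rec (n : ℕ) (d : ℤ) (p : Fin (n+2)) :
    C1 (n+1) d p = ∑ q : Fin (n+1),
      C1 n (d - if (q : ℕ) < (p : ℕ) then 1 else 0) q := by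
  have step1 : C1 (n+1) d p =
      ((Finset.univ.filter (fun e : Equiv.Perm (Fin (n+1)) =>
        (descents (n+1) e : ℤ) + (if ((e 0 : ℕ) < (p : ℕ)) then 1 else 0) = d)).card) := by
    rw [C1]
    apply (Finset.card_bij (fun e _ => Φ p e) ?_ ?_ ?_).symm
    · intro e he
      simp only [Finset.mem_filter, Finset.mem_univ, true_and] at he ⊢
      refine ⟨?_, Φ_zero p e⟩
      rw [descents_Φ]
      push_cast
      split_ifs at he ⊢ <;> omega
    · intro e₁ h₁ e₂ h₂ h
      exact Φ_inj p h
    · intro π hπ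
      simp only [Finset.mem_filter, Finset.mem_univ, true_and] at hπ
      obtain ⟨e, he⟩ := Φ_surj p π hπ.2
      refine ⟨e, ?_, he⟩
      simp only [Finset.mem_filter, Finset.mem_univ, true_and]
      have := hπ.1
      rw [← he, descents_Φ] at this
      push_cast at this ⊢
      split_ifs at this ⊢ <;> omega
  rw [step1, Finset.card_eq_sum_card_fiberwise
    (f := fun e : Equiv.Perm (Fin (n+1)) => e 0) (t := Finset.univ) (fun x _ => Finset.mem_univ _)]
  apply Finset.sum_congr rfl
  intro q _
  rw [Finset.filter_filter, C1]
  congr 1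
  apply Finset.filter_congr
  intro e _
  constructor
  · rintro ⟨h1, h2⟩
    refine ⟨?_, h2⟩
    rw [h2] at h1
    split_ifs at h1 ⊢ <;> omega
  · rintro ⟨h1, h2⟩
    refine ⟨?_, h2⟩
    rw [h2]
    split_ifs at h1 ⊢ <;> omega

lemma A_eq_C1 (n : ℕ) (d : ℤ) (k : ℕ) (h1 : 1 ≤ k) (h2 : k ≤ n+1) :
    A (n+1) d k = C1 n d ⟨k-1, by omega⟩ := by
  rw [A, C1]
  congr 1
  apply Finset.filter_congr
  intro π _
  constructor
  · rintro ⟨hd, i, hi, hv⟩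
    have : i = 0 := Fin.ext (by simpa using hi)
    rw [this] at hv
    exact ⟨hd, Fin.ext (by simp; omega)⟩
  · rintro ⟨hd, hv⟩
    refine ⟨hd, 0, rfl, ?_⟩
    rw [hv]
    simp
    omega

lemma Eul_eq_sum (n : ℕ) (d : ℤ) :
    Eul (n+1) d = ∑ q : Fin (n+1), C1 n d q := by
  rw [Eul, Finset.card_eq_sum_card_fiberwise
    (f := fun π : Equiv.Perm (Fin (n+1)) => π 0) (t := Finset.univ) (fun x _ => Finset.mem_univ _)]
  apply Finset.sum_congr rfl
  intro q _
  rw [Finset.filter_filter, C1]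

def Fz (n : ℕ) (d : ℤ) (k : ℕ) : ℤ :=
  if d < 0 then 0 else ∑ j ∈ Finset.range (d.toNat + 1),
    (-1)^j * (n.choose j) * (d+1-j)^(n-k) * (d-j)^(k-1)

lemma telescope (a b : ℤ) (hab : a = b + 1) (N k : ℕ) (hk : 1 ≤ k) :
    ∀ K, k - 1 ≤ K → K ≤ N →
      ∑ m ∈ Finset.Icc k K, a^(N-m) * b^(m-1) = a^(N+1-k) * b^(k-1) - a^(N-K) * b^K := by
  intro K
  induction K with
  | zero =>
    intro h1 h2
    have hk1 : k = 1 := by omega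
    subst hk1
    simp
  | succ K ih =>
    intro h1 h2
    rcases Nat.lt_or_ge K (k-1) with h | h
    · -- k = K + 2, empty sum
      have hkK : k = K + 2 := by omega
      rw [show Finset.Icc k (K+1) = ∅ by rw [Finset.Icc_eq_empty_iff]; omega]
      have e1 : N + 1 - k = N - (K+1) := by omega
      have e2 : k - 1 = K + 1 := by omega
      rw [Finset.sum_empty, e1, e2]
      ring
    · rw [Finset.sum_Icc_succ_top (by omega : k ≤ K + 1)]
      rw [ih h (by omega)]
      have e1 : N - K = (N - (K+1)) + 1 := by omega
      have e2 : (K + 1 : ℕ) - 1 = K := by omega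
      rw [e1, e2, pow_succ]
      have e3 : b ^ (K + 1) = b ^ K * b := pow_succ b K
      rw [e3]
      subst hab
      ring

lemma Fz_sum_Icc (n : ℕ) (d : ℤ) (hd : 0 ≤ d) (k K : ℕ) (h1 : 1 ≤ k) (hkK : k - 1 ≤ K)
    (hK : K ≤ n) :
    ∑ m ∈ Finset.Icc k K, Fz n d m =
      ∑ j ∈ Finset.range (d.toNat + 1), (-1)^j * (n.choose j) *
        ((d+1-j)^(n+1-k) * (d-j)^(k-1) - (d+1-j)^(n-K) * (d-j)^K) := by
  have hnot : ¬ d < 0 := by omega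
  simp only [Fz, if_neg hnot]
  rw [Finset.sum_comm]
  apply Finset.sum_congr rfl
  intro j _
  have expand : ∀ m, (-1:ℤ)^j * (n.choose j) * (d+1-j)^(n-m) * (d-j)^(m-1)
      = (-1)^j * (n.choose j) * ((d+1-j)^(n-m) * (d-j)^(m-1)) := by
    intro m; ring
  rw [Finset.sum_congr rfl (fun m _ => expand m), ← Finset.mul_sum,
    telescope (d+1-j) (d-j) (by ring) n k h1 K hkK hK]

lemma Fz_rec (n : ℕ) (d : ℤ) (hd : 0 ≤ d) (k : ℕ) (h1 : 1 ≤ k) (h2 : k ≤ n+2) :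
    Fz (n+2) d k = (∑ m ∈ Finset.Icc k (n+1), Fz (n+1) d m)
      + (∑ m ∈ Finset.Icc 1 (k-1), Fz (n+1) (d-1) m) := by
  rcases eq_or_lt_of_le hd with h0 | hpos
  · -- d = 0
    have hd0 : d = 0 := h0.symm
    subst hd0
    have hFz0 : ∀ N m : ℕ, 1 ≤ m → Fz N (0:ℤ) m = if m = 1 then 1 else 0 := by
      intro N m hm
      simp only [Fz, if_neg (by omega : ¬ (0:ℤ) < 0), Int.toNat_zero, Finset.range_one,
        Finset.sum_singleton]
      rw [Finset.sum_range_one]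
      norm_num
      rw [zero_pow_eq]
      congr 1
      simp only [eq_iff_iff]
      omega
    rw [hFz0 _ k h1]
    rw [Finset.sum_congr rfl (fun m hm => hFz0 (n+1) m (by
      rw [Finset.mem_Icc] at hm; omega))]
    rw [Finset.sum_congr rfl (fun m (hm : m ∈ Finset.Icc 1 (k-1)) =>
      (by simp [Fz] : Fz (n+1) ((0:ℤ)-1) m = 0))]
    rw [Finset.sum_const_zero, add_zero, Finset.sum_ite_eq' (Finset.Icc k (n+1)) 1 (fun _ => (1:ℤ))]
    simp only [Finset.mem_Icc]
    split_ifs <;> omega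
  · -- d ≥ 1
    have hD : ((d.toNat : ℤ)) = d := Int.toNat_of_nonneg hd
    have hD1 : 1 ≤ d.toNat := by omega
    have hnot : ¬ d < 0 := by omega
    have hDm : (d-1).toNat + 1 = d.toNat := by omega
    rw [Fz_sum_Icc (n+1) d hd k (n+1) h1 (by omega) (by omega)]
    have term2 : ∑ m ∈ Finset.Icc 1 (k-1), Fz (n+1) (d-1) m =
        ∑ j ∈ Finset.range (d.toNat), (-1)^j * ((n+1).choose j) *
          ((d-j)^(n+1) - (d-j)^(n+2-k) * (d-1-j)^(k-1)) := by
      rw [Fz_sum_Icc (n+1) (d-1) (by omega) 1 (k-1) le_rfl (by omega) (by omega)]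
      rw [← hDm]
      apply Finset.sum_congr rfl
      intro j _
      have e1 : (d - 1 + 1 - j) = d - j := by ring
      have e3 : n + 1 + 1 - 1 = n + 1 := by omega
      have e4 : n + 1 - (k-1) = n + 2 - k := by omega
      rw [e1, e3, e4]
      ring_nf
    rw [term2]
    -- now pure sums over j
    have cancel : ∑ j ∈ Finset.range (d.toNat + 1),
        (-1:ℤ)^j * ((n+1).choose j) * (d-j)^(n+1)
        = ∑ j ∈ Finset.range d.toNat, (-1:ℤ)^j * ((n+1).choose j) * (d-j)^(n+1) := by
      rw [Finset.sum_range_succ]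
      have : (d - (d.toNat : ℤ)) = 0 := by omega
      rw [this, zero_pow (by omega : n + 1 ≠ 0), mul_zero, add_zero]
    have pascal : ∀ i : ℕ, (((n+2).choose (i+1) : ℕ) : ℤ)
        = ((n+1).choose i : ℤ) + ((n+1).choose (i+1) : ℤ) := by
      intro i
      exact_mod_cast congrArg (Nat.cast (R := ℤ)) (Nat.choose_succ_succ (n+1) i)
    have key : ∑ j ∈ Finset.range (d.toNat + 1),
          (-1:ℤ)^j * ((n+2).choose j) * (d+1-j)^(n+2-k) * (d-j)^(k-1)
        = (∑ j ∈ Finset.range (d.toNat + 1),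
            (-1:ℤ)^j * ((n+1).choose j) * ((d+1-j)^(n+2-k) * (d-j)^(k-1)))
          - ∑ j ∈ Finset.range d.toNat,
            (-1:ℤ)^j * ((n+1).choose j) * ((d-j)^(n+2-k) * (d-1-j)^(k-1)) := by
      rw [Finset.sum_range_succ' (fun j => (-1:ℤ)^j * ((n+2).choose j) * (d+1-j)^(n+2-k) * (d-j)^(k-1)) d.toNat,
          Finset.sum_range_succ' (fun j => (-1:ℤ)^j * ((n+1).choose j) * ((d+1-j)^(n+2-k) * (d-j)^(k-1))) d.toNat]
      simp only [Nat.choose_zero_right, Nat.cast_one, pow_zero]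
      have : ∀ i ∈ Finset.range d.toNat,
          (-1:ℤ)^(i+1) * ((n+2).choose (i+1)) * (d+1-(i+1:ℕ))^(n+2-k) * (d-(i+1:ℕ))^(k-1)
          = (-1:ℤ)^(i+1) * ((n+1).choose (i+1)) * ((d+1-(i+1:ℕ))^(n+2-k) * (d-(i+1:ℕ))^(k-1))
            - (-1:ℤ)^i * ((n+1).choose i) * ((d-i)^(n+2-k) * (d-1-i)^(k-1)) := by
        intro i _
        rw [pascal i]
        have b1 : (d+1-((i:ℤ)+1)) = d - i := by ring
        have b2 : (d-((i:ℤ)+1)) = d - 1 - i := by ring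
        push_cast
        rw [b1, b2]
        ring
      rw [Finset.sum_congr rfl this, Finset.sum_sub_distrib]
      ring
    -- assemble
    simp only [Fz, if_neg hnot]
    have exps : n + 1 + 1 - k = n + 2 - k := by omega
    have expz : n + 1 - (n+1) = 0 := by omega
    rw [exps, expz] at *
    simp only [pow_zero, one_mul] at *
    rw [key]
    simp only [mul_sub, Finset.sum_sub_distrib]
    rw [cancel]
    ring

lemma Fz_one (d : ℤ) : Fz 1 d 1 = if d = 0 then 1 else 0 := by
  rcases lt_or_ge d 0 with h | h
  · rw [Fz, if_pos h, if_neg (by omega)]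
  · rw [Fz, if_neg (by omega)]
    have : ∀ j ∈ Finset.range (d.toNat + 1),
        (-1:ℤ)^j * ((1:ℕ).choose j) * (d+1-j)^(1-1) * (d-j)^(1-1)
        = (-1:ℤ)^j * ((1:ℕ).choose j) := by
      intro j _
      simp
    rw [Finset.sum_congr rfl this]
    have key : ∀ D : ℕ, ∑ j ∈ Finset.range (D + 1), (-1:ℤ)^j * ((1:ℕ).choose j)
        = if D = 0 then 1 else 0 := by
      intro D
      induction D with
      | zero => simp
      | succ D ih =>
        rw [Finset.sum_range_succ, ih]
        rcases Nat.eq_zero_or_pos D with h' | h'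
        · subst h'; norm_num
        · rw [if_neg (by omega), if_neg (by omega), Nat.choose_eq_zero_of_lt (by omega)]
          norm_num
    rw [key]
    have : d.toNat = 0 ↔ d = 0 := by omega
    simp [this]

theorem C1_eq_Fz : ∀ (n : ℕ) (d : ℤ) (p : Fin (n+1)),
    (C1 n d p : ℤ) = Fz (n+1) d ((p : ℕ)+1) := by
  intro n
  induction n with
  | zero =>
    intro d p
    have hp : (p : ℕ) = 0 := by omega
    rw [C1_base, hp, Fz_one]
    split_ifs <;> norm_num
  | succ n ih =>
    intro d p
    rcases lt_or_ge d 0 with hneg | hd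
    · rw [C1_neg hneg, Fz, if_pos hneg]; norm_num
    · rw [C1_rec]
      push_cast
      have hsummand : ∀ q : Fin (n+1),
          (C1 n (d - if (q : ℕ) < (p : ℕ) then 1 else 0) q : ℤ)
          = Fz (n+1) (d - if (q : ℕ) < (p : ℕ) then 1 else 0) ((q : ℕ)+1) := fun q => ih _ q
      rw [Finset.sum_congr rfl (fun q _ => hsummand q)]
      rw [Fin.sum_univ_eq_sum_range
        (fun m => Fz (n+1) (d - if m < (p : ℕ) then 1 else 0) (m+1)) (n+1)]
      have hp : (p : ℕ) ≤ n + 1 := by omega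
      rw [Finset.range_eq_Ico, ← Finset.sum_Ico_consecutive _ (Nat.zero_le (p:ℕ)) hp]
      have part1 : ∑ m ∈ Finset.Ico 0 (p:ℕ),
          Fz (n+1) (d - if m < (p : ℕ) then 1 else 0) (m+1)
          = ∑ m ∈ Finset.Icc 1 (p:ℕ), Fz (n+1) (d-1) m := by
        rw [show Finset.Icc 1 (p:ℕ) = Finset.Ico 1 ((p:ℕ)+1) from (Finset.Ico_add_one_right_eq_Icc 1 _).symm]
        rw [Finset.sum_Ico_eq_sum_range (f := fun m => Fz (n+1) (d-1) m),
          Nat.Ico_zero_eq_range]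
        rw [show (p:ℕ) + 1 - 1 = (p:ℕ) from rfl]
        apply Finset.sum_congr rfl
        intro m hm
        rw [Finset.mem_range] at hm
        rw [if_pos hm, Nat.add_comm 1 m]
      have part2 : ∑ m ∈ Finset.Ico (p:ℕ) (n+1),
          Fz (n+1) (d - if m < (p : ℕ) then 1 else 0) (m+1)
          = ∑ m ∈ Finset.Icc ((p:ℕ)+1) (n+1), Fz (n+1) d m := by
        rw [show Finset.Icc ((p:ℕ)+1) (n+1) = Finset.Ico ((p:ℕ)+1) (n+2)
          from (Finset.Ico_add_one_right_eq_Icc _ _).symm]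
        rw [Finset.sum_Ico_eq_sum_range (f := fun m => Fz (n+1) d m),
          Finset.sum_Ico_eq_sum_range
            (f := fun m => Fz (n+1) (d - if m < (p : ℕ) then 1 else 0) (m+1))]
        rw [show (n+2) - ((p:ℕ)+1) = (n+1) - (p:ℕ) by omega]
        apply Finset.sum_congr rfl
        intro m hm
        rw [if_neg (by omega), sub_zero]
        congr 1
        omega
      rw [part1, part2]
      rw [Fz_rec n d hd ((p:ℕ)+1) (by omega) (by omega)]
      rw [show ((p:ℕ)+1) - 1 = (p:ℕ) by omega]
      ring

lemma A_eq_Fz (m : ℕ) (d : ℤ) (k : ℕ) (h1 : 1 ≤ k) (h2 : k ≤ m+1) :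
    (A (m+1) d k : ℤ) = Fz (m+1) d k := by
  rw [A_eq_C1 m d k h1 h2, C1_eq_Fz m d ⟨k-1, by omega⟩]
  congr 1
  simp
  omega

lemma Eul_closed (m : ℕ) (d : ℤ) (hd : 0 ≤ d) :
    (Eul (m+1) d : ℤ) = ∑ j ∈ Finset.range (d.toNat + 1),
      (-1)^j * ((m+1).choose j) * ((d+1-j)^(m+1) - (d-j)^(m+1)) := by
  rw [Eul_eq_sum]
  push_cast
  rw [Finset.sum_congr rfl (fun q (_ : q ∈ Finset.univ) => C1_eq_Fz m d q)]
  rw [Fin.sum_univ_eq_sum_range (fun q => Fz (m+1) d (q+1)) (m+1)]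
  have : ∑ q ∈ Finset.range (m+1), Fz (m+1) d (q+1)
      = ∑ q ∈ Finset.Icc 1 (m+1), Fz (m+1) d q := by
    rw [show Finset.Icc 1 (m+1) = Finset.Ico 1 (m+2) from (Finset.Ico_add_one_right_eq_Icc 1 _).symm]
    rw [Finset.sum_Ico_eq_sum_range (f := fun q => Fz (m+1) d q)]
    rw [show (m+2) - 1 = m+1 from rfl]
    exact Finset.sum_congr rfl (fun q _ => by congr 1; omega)
  rw [this, Fz_sum_Icc (m+1) d hd 1 (m+1) le_rfl (by omega) le_rfl]
  apply Finset.sum_congr rfl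
  intro j _
  rw [show m + 1 + 1 - 1 = m + 1 by omega, show m + 1 - (m+1) = 0 by omega]
  simp

set_option maxHeartbeats 2000000 in
theorem stmt16 (d : ℕ) (hd : 0 < d) :
    ∀ ε : ℝ, 0 < ε → ∃ N : ℕ, ∀ n : ℕ, N ≤ n → ∀ k : ℕ, 1 ≤ k → k ≤ n →
      |((A n (d : ℤ) k : ℝ) / (Eul n (d : ℤ) : ℝ)) /
          ((1 - (d : ℝ) / ((d : ℝ) + 1)) * ((d : ℝ) / ((d : ℝ) + 1)) ^ (k - 1)) - 1| < ε := by
  intro ε hε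
  have hd1 : (1:ℝ) ≤ (d:ℝ) := by exact_mod_cast hd
  have hdp : (0:ℝ) < d := by linarith
  have hdp1 : (0:ℝ) < (d:ℝ) + 1 := by linarith
  set r : ℝ := (d:ℝ) / ((d:ℝ) + 1) with hr_def
  have hr0 : 0 < r := by positivity
  have hr1 : r < 1 := by rw [hr_def, div_lt_one hdp1]; linarith
  have htend : Filter.Tendsto (fun n : ℕ => ((2*(d:ℝ)+1)/r) * ((n:ℝ)^d * r^n))
      Filter.atTop (nhds 0) := by
    have := (tendsto_pow_const_mul_const_pow_of_lt_one d hr0.le hr1).const_mul ((2*(d:ℝ)+1)/r)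
    simpa using this
  obtain ⟨N₀, hN₀⟩ := Metric.tendsto_atTop.mp htend (min (1/2) (ε/5))
    (lt_min (by norm_num) (by positivity))
  refine ⟨max N₀ 1, ?_⟩
  intro n hn k hk1 hk2
  obtain ⟨m, rfl⟩ : ∃ m, n = m + 1 := ⟨n-1, by omega⟩
  set δ : ℝ := (2*(d:ℝ)+1) * ((m:ℝ)+1)^d * r^m with hδ_def
  have hδ0 : 0 ≤ δ := by positivity
  have hδsmall : δ < min (1/2) (ε/5) := by
    have h := hN₀ (m+1) (le_trans (le_max_left _ _) hn)
    rw [Real.dist_eq, sub_zero] at h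
    have heq : ((2*(d:ℝ)+1)/r) * (((m+1:ℕ):ℝ)^d * r^(m+1)) = δ := by
      rw [hδ_def]
      push_cast
      rw [pow_succ]
      field_simp
    rw [heq] at h
    calc δ = |δ| := (abs_of_nonneg hδ0).symm
    _ < _ := h
  have hδhalf : δ ≤ 1/2 := le_of_lt (lt_of_lt_of_le hδsmall (min_le_left _ _))
  have hδε : δ < ε/5 := lt_of_lt_of_le hδsmall (min_le_right _ _)
  -- main quantities
  obtain ⟨e2, rfl⟩ : ∃ e2, k = e2+1 := ⟨k-1, by omega⟩
  have he2 : e2 + 1 - 1 = e2 := by omega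
  simp only [Nat.add_sub_cancel]
  have he2m : e2 ≤ m := by omega
  set X : ℝ := (A (m+1) (d:ℤ) (e2+1) : ℝ) with hX_def
  set E : ℝ := (Eul (m+1) (d:ℤ) : ℝ) with hE_def
  set T : ℝ := ((d:ℝ)+1)^(m-e2) * (d:ℝ)^e2 with hT_def
  set P : ℝ := ((d:ℝ)+1)^(m+1) with hP_def
  have hT : 0 < T := by positivity
  have hP : 0 < P := by positivity
  have hMone : (1:ℝ) ≤ ((m:ℝ)+1)^d := one_le_pow₀ (by linarith : (1:ℝ) ≤ (m:ℝ)+1)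
  have hXsum : X = ∑ j ∈ Finset.range (d + 1),
      (-1:ℝ)^j * (((m+1).choose j : ℕ) : ℝ) * ((d:ℝ)+1-(j:ℝ))^(m-e2) * ((d:ℝ)-(j:ℝ))^e2 := by
    have h := A_eq_Fz m (d:ℤ) (e2+1) hk1 hk2
    rw [Fz, if_neg (not_lt.mpr (Int.natCast_nonneg d)), Int.toNat_natCast] at h
    have h2 := congrArg (fun z : ℤ => (z : ℝ)) h
    push_cast [he2] at h2
    rw [hX_def]
    exact h2
  have hEsum : E = ∑ j ∈ Finset.range (d + 1),
      (-1:ℝ)^j * (((m+1).choose j : ℕ) : ℝ) *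
        (((d:ℝ)+1-(j:ℝ))^(m+1) - ((d:ℝ)-(j:ℝ))^(m+1)) := by
    have h := Eul_closed m (d:ℤ) (Int.natCast_nonneg d)
    rw [Int.toNat_natCast] at h
    have h2 := congrArg (fun z : ℤ => (z : ℝ)) h
    push_cast at h2
    rw [hE_def]
    exact h2
  -- estimate 1 : |X - T| ≤ δ * T
  have hsplit1 : X - T = ∑ i ∈ Finset.range d,
      (-1:ℝ)^(i+1) * (((m+1).choose (i+1) : ℕ) : ℝ) *
        ((d:ℝ)+1-((i:ℝ)+1))^(m-e2) * ((d:ℝ)-((i:ℝ)+1))^e2 := by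
    rw [hXsum, Finset.sum_range_succ'
      (fun j => (-1:ℝ)^j * (((m+1).choose j : ℕ) : ℝ) * ((d:ℝ)+1-(j:ℝ))^(m-e2) * ((d:ℝ)-(j:ℝ))^e2) d]
    push_cast
    simp only [pow_zero, Nat.choose_zero_right, Nat.cast_one, sub_zero, one_mul, mul_one]
    rw [hT_def]
    ring
  have hbound1 : ∀ i ∈ Finset.range d,
      |(-1:ℝ)^(i+1) * (((m+1).choose (i+1) : ℕ) : ℝ) *
        ((d:ℝ)+1-((i:ℝ)+1))^(m-e2) * ((d:ℝ)-((i:ℝ)+1))^e2|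
      ≤ ((m:ℝ)+1)^d * ((d:ℝ)^(m-e2) * ((d:ℝ)-1)^e2) := by
    intro i hi
    rw [Finset.mem_range] at hi
    have hid : (i:ℝ) ≤ (d:ℝ) - 1 := by
      have : (i:ℝ) + 1 ≤ (d:ℝ) := by exact_mod_cast hi
      linarith
    have hCb : (((m+1).choose (i+1) : ℕ) : ℝ) ≤ ((m:ℝ)+1)^d := by
      have h1 : (m+1).choose (i+1) ≤ (m+1)^(i+1) := Nat.choose_le_pow _ _
      have h2 : (m+1)^(i+1) ≤ (m+1)^d := Nat.pow_le_pow_right (by omega) (by omega)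
      have := le_trans h1 h2
      calc (((m+1).choose (i+1) : ℕ) : ℝ) ≤ (((m+1)^d : ℕ) : ℝ) := by exact_mod_cast this
      _ = ((m:ℝ)+1)^d := by push_cast; ring
    have ha : |(d:ℝ)+1-((i:ℝ)+1)| ≤ (d:ℝ) := by
      rw [abs_le]; constructor <;> nlinarith [Nat.cast_nonneg (α := ℝ) i]
    have hb : |(d:ℝ)-((i:ℝ)+1)| ≤ (d:ℝ)-1 := by
      rw [abs_le]; constructor <;> nlinarith [Nat.cast_nonneg (α := ℝ) i]
    have h1 : |(-1:ℝ)^(i+1)| = 1 := by rw [abs_pow, abs_neg, abs_one, one_pow]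
    rw [abs_mul, abs_mul, abs_mul, h1, one_mul, Nat.abs_cast, abs_pow, abs_pow]
    calc (((m+1).choose (i+1) : ℕ) : ℝ) * |(d:ℝ)+1-((i:ℝ)+1)|^(m-e2) * |(d:ℝ)-((i:ℝ)+1)|^e2
        ≤ ((m:ℝ)+1)^d * (d:ℝ)^(m-e2) * ((d:ℝ)-1)^e2 := by
          have p1 : |(d:ℝ)+1-((i:ℝ)+1)|^(m-e2) ≤ (d:ℝ)^(m-e2) :=
            pow_le_pow_left₀ (abs_nonneg _) ha _
          have p2 : |(d:ℝ)-((i:ℝ)+1)|^e2 ≤ ((d:ℝ)-1)^e2 :=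
            pow_le_pow_left₀ (abs_nonneg _) hb _
          exact mul_le_mul (mul_le_mul hCb p1 (pow_nonneg (abs_nonneg _) _) (by positivity))
            p2 (pow_nonneg (abs_nonneg _) _) (by positivity)
      _ = ((m:ℝ)+1)^d * ((d:ℝ)^(m-e2) * ((d:ℝ)-1)^e2) := by ring
  have key_ineq : (d:ℝ)^(m-e2) * ((d:ℝ)-1)^e2 ≤ r^m * T := by
    have hstep : ((d:ℝ)-1) ≤ (d:ℝ)*(d:ℝ)/((d:ℝ)+1) := by
      rw [le_div_iff₀ hdp1]; nlinarith
    calc (d:ℝ)^(m-e2) * ((d:ℝ)-1)^e2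
        ≤ (d:ℝ)^(m-e2) * ((d:ℝ)*(d:ℝ)/((d:ℝ)+1))^e2 := by
          apply mul_le_mul_of_nonneg_left _ (by positivity)
          exact pow_le_pow_left₀ (by linarith) hstep _
      _ = r^m * T := by
          have hrm : r^m = r^(m-e2) * r^e2 := by rw [← pow_add]; congr 1; omega
          rw [hrm, hr_def, hT_def, div_pow, div_pow]
          field_simp
          ring_nf
          rw [mul_assoc, ← mul_pow, inv_mul_cancel₀ (by positivity), one_pow, mul_one]
  have est1 : |X - T| ≤ δ * T := by
    have h1 : |X - T| ≤ (d:ℝ) * (((m:ℝ)+1)^d * ((d:ℝ)^(m-e2) * ((d:ℝ)-1)^e2)) := by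
      rw [hsplit1]
      calc |∑ i ∈ Finset.range d, _| ≤ ∑ i ∈ Finset.range d,
          |(-1:ℝ)^(i+1) * (((m+1).choose (i+1) : ℕ) : ℝ) *
            ((d:ℝ)+1-((i:ℝ)+1))^(m-e2) * ((d:ℝ)-((i:ℝ)+1))^e2| :=
          Finset.abs_sum_le_sum_abs _ _
        _ ≤ (Finset.range d).card • (((m:ℝ)+1)^d * ((d:ℝ)^(m-e2) * ((d:ℝ)-1)^e2)) :=
          Finset.sum_le_card_nsmul _ _ _ hbound1
        _ = (d:ℝ) * (((m:ℝ)+1)^d * ((d:ℝ)^(m-e2) * ((d:ℝ)-1)^e2)) := by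
          rw [Finset.card_range, nsmul_eq_mul]
    calc |X - T| ≤ (d:ℝ) * (((m:ℝ)+1)^d * ((d:ℝ)^(m-e2) * ((d:ℝ)-1)^e2)) := h1
      _ ≤ (d:ℝ) * (((m:ℝ)+1)^d * (r^m * T)) := by
          apply mul_le_mul_of_nonneg_left _ (by positivity)
          exact mul_le_mul_of_nonneg_left key_ineq (by positivity)
      _ ≤ (2*(d:ℝ)+1) * (((m:ℝ)+1)^d * (r^m * T)) :=
          mul_le_mul_of_nonneg_right (by linarith) (by positivity)
      _ = δ * T := by rw [hδ_def]; ring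
  -- estimate 2 : |E - P| ≤ δ * P
  have hsplit2 : E - P = -((d:ℝ)^(m+1)) + ∑ i ∈ Finset.range d,
      (-1:ℝ)^(i+1) * (((m+1).choose (i+1) : ℕ) : ℝ) *
        (((d:ℝ)+1-((i:ℝ)+1))^(m+1) - ((d:ℝ)-((i:ℝ)+1))^(m+1)) := by
    rw [hEsum, Finset.sum_range_succ'
      (fun j => (-1:ℝ)^j * (((m+1).choose j : ℕ) : ℝ) *
        (((d:ℝ)+1-(j:ℝ))^(m+1) - ((d:ℝ)-(j:ℝ))^(m+1))) d]
    push_cast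
    simp only [pow_zero, Nat.choose_zero_right, Nat.cast_one, sub_zero, one_mul, mul_one]
    rw [hP_def]
    ring
  have hbound2 : ∀ i ∈ Finset.range d,
      |(-1:ℝ)^(i+1) * (((m+1).choose (i+1) : ℕ) : ℝ) *
        (((d:ℝ)+1-((i:ℝ)+1))^(m+1) - ((d:ℝ)-((i:ℝ)+1))^(m+1))|
      ≤ ((m:ℝ)+1)^d * (2 * (d:ℝ)^(m+1)) := by
    intro i hi
    rw [Finset.mem_range] at hi
    have hid : (i:ℝ) ≤ (d:ℝ) - 1 := by
      have : (i:ℝ) + 1 ≤ (d:ℝ) := by exact_mod_cast hi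
      linarith
    have hCb : (((m+1).choose (i+1) : ℕ) : ℝ) ≤ ((m:ℝ)+1)^d := by
      have h1 : (m+1).choose (i+1) ≤ (m+1)^(i+1) := Nat.choose_le_pow _ _
      have h2 : (m+1)^(i+1) ≤ (m+1)^d := Nat.pow_le_pow_right (by omega) (by omega)
      have := le_trans h1 h2
      calc (((m+1).choose (i+1) : ℕ) : ℝ) ≤ (((m+1)^d : ℕ) : ℝ) := by exact_mod_cast this
      _ = ((m:ℝ)+1)^d := by push_cast; ring
    have ha : |(d:ℝ)+1-((i:ℝ)+1)| ≤ (d:ℝ) := by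
      rw [abs_le]; constructor <;> nlinarith [Nat.cast_nonneg (α := ℝ) i]
    have hb : |(d:ℝ)-((i:ℝ)+1)| ≤ (d:ℝ) := by
      rw [abs_le]; constructor <;> nlinarith [Nat.cast_nonneg (α := ℝ) i]
    have h1 : |(-1:ℝ)^(i+1)| = 1 := by rw [abs_pow, abs_neg, abs_one, one_pow]
    rw [abs_mul, abs_mul, h1, one_mul, Nat.abs_cast]
    have hdiff : |((d:ℝ)+1-((i:ℝ)+1))^(m+1) - ((d:ℝ)-((i:ℝ)+1))^(m+1)| ≤ 2 * (d:ℝ)^(m+1) := by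
      calc |((d:ℝ)+1-((i:ℝ)+1))^(m+1) - ((d:ℝ)-((i:ℝ)+1))^(m+1)|
          ≤ |((d:ℝ)+1-((i:ℝ)+1))^(m+1)| + |((d:ℝ)-((i:ℝ)+1))^(m+1)| := abs_sub _ _
        _ ≤ (d:ℝ)^(m+1) + (d:ℝ)^(m+1) := by
            rw [abs_pow, abs_pow]
            exact add_le_add (pow_le_pow_left₀ (abs_nonneg _) ha _)
              (pow_le_pow_left₀ (abs_nonneg _) hb _)
        _ = 2 * (d:ℝ)^(m+1) := by ring
    exact mul_le_mul hCb hdiff (abs_nonneg _) (by positivity)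
  have key_ineq2 : (d:ℝ)^(m+1) ≤ r^m * P := by
    have : r^m * P = (d:ℝ)^m * ((d:ℝ)+1) := by
      rw [hr_def, hP_def, div_pow, pow_succ]
      field_simp
    rw [this, pow_succ]
    nlinarith [pow_nonneg hdp.le m]
  have est2 : |E - P| ≤ δ * P := by
    have h1 : |E - P| ≤ (d:ℝ)^(m+1) + (d:ℝ) * (((m:ℝ)+1)^d * (2 * (d:ℝ)^(m+1))) := by
      rw [hsplit2]
      calc |-((d:ℝ)^(m+1)) + ∑ i ∈ Finset.range d, _|
          ≤ |-((d:ℝ)^(m+1))| + |∑ i ∈ Finset.range d,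
            (-1:ℝ)^(i+1) * (((m+1).choose (i+1) : ℕ) : ℝ) *
              (((d:ℝ)+1-((i:ℝ)+1))^(m+1) - ((d:ℝ)-((i:ℝ)+1))^(m+1))| := abs_add_le _ _
        _ ≤ (d:ℝ)^(m+1) + (d:ℝ) * (((m:ℝ)+1)^d * (2 * (d:ℝ)^(m+1))) := by
            apply add_le_add
            · rw [abs_neg, abs_pow]
              exact le_of_eq (by rw [abs_of_nonneg hdp.le])
            · calc |∑ i ∈ Finset.range d, _| ≤ ∑ i ∈ Finset.range d,
                  |(-1:ℝ)^(i+1) * (((m+1).choose (i+1) : ℕ) : ℝ) *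
                    (((d:ℝ)+1-((i:ℝ)+1))^(m+1) - ((d:ℝ)-((i:ℝ)+1))^(m+1))| :=
                  Finset.abs_sum_le_sum_abs _ _
                _ ≤ (Finset.range d).card • (((m:ℝ)+1)^d * (2 * (d:ℝ)^(m+1))) :=
                  Finset.sum_le_card_nsmul _ _ _ hbound2
                _ = (d:ℝ) * (((m:ℝ)+1)^d * (2 * (d:ℝ)^(m+1))) := by
                  rw [Finset.card_range, nsmul_eq_mul]
    have h2 : (d:ℝ)^(m+1) + (d:ℝ) * (((m:ℝ)+1)^d * (2 * (d:ℝ)^(m+1)))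
        ≤ (2*(d:ℝ)+1) * ((m:ℝ)+1)^d * (d:ℝ)^(m+1) := by
      nlinarith [pow_nonneg hdp.le (m+1), hMone, pow_nonneg (by linarith : (0:ℝ) ≤ (m:ℝ)+1) d]
    have h3 : (2*(d:ℝ)+1) * ((m:ℝ)+1)^d * (d:ℝ)^(m+1) ≤ δ * P := by
      calc (2*(d:ℝ)+1) * ((m:ℝ)+1)^d * (d:ℝ)^(m+1)
          = ((2*(d:ℝ)+1) * ((m:ℝ)+1)^d) * (d:ℝ)^(m+1) := by ring
        _ ≤ ((2*(d:ℝ)+1) * ((m:ℝ)+1)^d) * (r^m * P) :=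
            mul_le_mul_of_nonneg_left key_ineq2 (by positivity)
        _ = δ * P := by rw [hδ_def]; ring
    linarith
  -- final combination
  have hE_lb : P/2 ≤ E := by
    have := (abs_le.mp est2).1
    nlinarith
  have hEpos : 0 < E := lt_of_lt_of_le (by positivity) hE_lb
  have hPs : P = ((d:ℝ)+1)^(m-e2) * ((d:ℝ)+1)^(e2+1) := by
    rw [hP_def, ← pow_add]
    congr 1
    omega
  have ht : (1 - r) * r^e2 = T / P := by
    rw [hPs, hT_def, hr_def, pow_succ]
    rw [div_pow]
    field_simp
    ring
  have hrw : (X / E) / ((1 - r) * r^e2) - 1 = (X*P - E*T)/(E*T) := by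
    rw [ht]
    field_simp
  rw [hrw]
  have hmain : |X*P - E*T| ≤ 2*δ*(T*P) := by
    have : X*P - E*T = (X-T)*P + (P-E)*T := by ring
    rw [this]
    calc |(X-T)*P + (P-E)*T| ≤ |(X-T)*P| + |(P-E)*T| := abs_add_le _ _
      _ = |X-T| * P + |E-P| * T := by
          rw [abs_mul, abs_mul, abs_of_pos hP, abs_of_pos hT, abs_sub_comm P E]
      _ ≤ (δ*T)*P + (δ*P)*T := add_le_add
          (mul_le_mul_of_nonneg_right est1 hP.le) (mul_le_mul_of_nonneg_right est2 hT.le)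
      _ = 2*δ*(T*P) := by ring
  rw [abs_div, abs_of_pos (by positivity : (0:ℝ) < E*T)]
  calc |X*P - E*T| / (E*T) ≤ (2*δ*(T*P)) / ((P/2)*T) := by
        apply div_le_div₀ (by positivity) hmain (by positivity)
        exact mul_le_mul_of_nonneg_right hE_lb hT.le
    _ = 4*δ := by field_simp; ring
    _ < ε := by linarith
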